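/- Let f : ℝ → ℝ be continuous with 1 − (y²−1)·f(y) > 0 for all y, and let c > 1. Then: (i) for 1 < y₀ < c the improper integral ∫₁^{y₀} (−√(c²−1)·√(1−(y²−1)f(y)) − √(c²−y²))/((y²−1)·√(c²−y²)) dy diverges to −∞; (ii) the improper integral ∫_{−c}^{c} (√(c²−1)·√(1−(y²−1)f(y)) − √(c²−y²))/((y²−1)·√(c²−y²)) dy converges. -/

import Mathlib

open MeasureTheory intervalIntegral Real Filter Set

private theorem stmt_14_part1 (f : ℝ → ℝ) (hf : Continuous f)
    (hpos : ∀ y, 1 - (y ^ 2 - 1) * f y > 0)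
    (c : ℝ) (hc : 1 < c) :
    ∀ y₀ : ℝ, 1 < y₀ → y₀ < c →
      Tendsto
        (fun ε => ∫ y in (1 + ε)..y₀,
          (-Real.sqrt (c ^ 2 - 1) * Real.sqrt (1 - (y ^ 2 - 1) * f y)
              - Real.sqrt (c ^ 2 - y ^ 2))
            / ((y ^ 2 - 1) * Real.sqrt (c ^ 2 - y ^ 2)))
        (nhdsWithin 0 (Set.Ioi 0)) atBot := by
  intro y₀ hy₀1 hy₀c
  have hc0 : (0:ℝ) < c := lt_trans one_pos hc
  set h : ℝ → ℝ := fun y =>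
    (-Real.sqrt (c ^ 2 - 1) * Real.sqrt (1 - (y ^ 2 - 1) * f y)
        - Real.sqrt (c ^ 2 - y ^ 2)) / ((y ^ 2 - 1) * Real.sqrt (c ^ 2 - y ^ 2)) with hh
  have hδ : (0:ℝ) < c ^ 2 - y₀ ^ 2 := by nlinarith
  set δ : ℝ := Real.sqrt (c ^ 2 - y₀ ^ 2) with hδdef
  have hδpos : 0 < δ := Real.sqrt_pos.mpr hδ
  set K : ℝ := (y₀ + 1) * c with hK
  have hKpos : 0 < K := by positivity
  set A : ℝ := δ / K with hA
  have hApos : 0 < A := div_pos hδpos hKpos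
  -- the dominating function
  set G : ℝ → ℝ := fun ε => -A * Real.log (y₀ - 1) + A * Real.log ε with hG
  have hGtend : Tendsto G (nhdsWithin 0 (Set.Ioi 0)) atBot := by
    apply tendsto_atBot_add_const_left
    exact (Real.tendsto_log_nhdsGT_zero).const_mul_atBot hApos
  apply tendsto_atBot_mono' _ _ hGtend
  have hmem : Ioo (0:ℝ) (y₀ - 1) ∈ nhdsWithin (0:ℝ) (Set.Ioi 0) :=
    Ioo_mem_nhdsGT_of_mem ⟨le_refl 0, by linarith⟩
  filter_upwards [hmem] with ε hε
  obtain ⟨hε0, hεlt⟩ := hε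
  have hab : 1 + ε ≤ y₀ := by linarith
  -- facts on Icc (1+ε) y₀
  have hfacts : ∀ y ∈ Icc (1 + ε) y₀,
      0 < y ^ 2 - 1 ∧ 0 < c ^ 2 - y ^ 2 ∧ ε ≤ y - 1 := by
    intro y hy
    obtain ⟨h1, h2⟩ := hy
    refine ⟨by nlinarith, by nlinarith, by linarith⟩
  have hDcont : Continuous (fun y : ℝ => (y ^ 2 - 1) * Real.sqrt (c ^ 2 - y ^ 2)) := by
    fun_prop
  have hNcont : Continuous (fun y : ℝ =>
      -Real.sqrt (c ^ 2 - 1) * Real.sqrt (1 - (y ^ 2 - 1) * f y)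
        - Real.sqrt (c ^ 2 - y ^ 2)) := by fun_prop
  have hI1 : IntervalIntegrable h volume (1 + ε) y₀ := by
    apply ContinuousOn.intervalIntegrable
    rw [uIcc_of_le hab]
    apply ContinuousOn.div hNcont.continuousOn hDcont.continuousOn
    intro y hy
    obtain ⟨h1, h2, _⟩ := hfacts y hy
    exact ne_of_gt (mul_pos h1 (Real.sqrt_pos.mpr h2))
  have hI2 : IntervalIntegrable (fun y : ℝ => -A * (1 / (y - 1))) volume (1 + ε) y₀ := by
    apply ContinuousOn.intervalIntegrable
    rw [uIcc_of_le hab]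
    apply ContinuousOn.mul continuousOn_const
    apply ContinuousOn.div continuousOn_const (by fun_prop)
    intro y hy
    obtain ⟨_, _, h3⟩ := hfacts y hy
    intro hzero
    rw [hzero] at h3
    linarith
  have hmono : ∀ y ∈ Icc (1 + ε) y₀, h y ≤ -A * (1 / (y - 1)) := by
    intro y hy
    obtain ⟨h1, h2, h3⟩ := hfacts y hy
    obtain ⟨hy1, hy2⟩ := hy
    have hy1' : 1 < y := by linarith
    have hsqB : 0 < Real.sqrt (c ^ 2 - y ^ 2) := Real.sqrt_pos.mpr h2
    have hDpos : 0 < (y ^ 2 - 1) * Real.sqrt (c ^ 2 - y ^ 2) := mul_pos h1 hsqB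
    -- N ≤ -δ
    have hNle : -Real.sqrt (c ^ 2 - 1) * Real.sqrt (1 - (y ^ 2 - 1) * f y)
        - Real.sqrt (c ^ 2 - y ^ 2) ≤ -δ := by
      have t1 : -Real.sqrt (c ^ 2 - 1) * Real.sqrt (1 - (y ^ 2 - 1) * f y) ≤ 0 := by
        have : 0 ≤ Real.sqrt (c ^ 2 - 1) * Real.sqrt (1 - (y ^ 2 - 1) * f y) := by positivity
        linarith
      have t2 : δ ≤ Real.sqrt (c ^ 2 - y ^ 2) :=
        Real.sqrt_le_sqrt (by nlinarith)
      linarith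
    -- D ≤ K * (y - 1)
    have hDle : (y ^ 2 - 1) * Real.sqrt (c ^ 2 - y ^ 2) ≤ K * (y - 1) := by
      have t1 : Real.sqrt (c ^ 2 - y ^ 2) ≤ c := by
        have := Real.sqrt_le_sqrt (show c ^ 2 - y ^ 2 ≤ c ^ 2 by nlinarith)
        rwa [Real.sqrt_sq hc0.le] at this
      have t2 : 0 ≤ y ^ 2 - 1 := h1.le
      have t3 : y ^ 2 - 1 ≤ (y₀ + 1) * (y - 1) := by nlinarith
      calc (y ^ 2 - 1) * Real.sqrt (c ^ 2 - y ^ 2) ≤ (y ^ 2 - 1) * c :=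
            mul_le_mul_of_nonneg_left t1 t2
        _ ≤ ((y₀ + 1) * (y - 1)) * c := by
            apply mul_le_mul_of_nonneg_right t3 hc0.le
        _ = K * (y - 1) := by rw [hK]; ring
    -- conclude
    rw [hh]; simp only
    rw [show -A * (1 / (y - 1)) = -A / (y - 1) by ring]
    rw [div_le_div_iff₀ hDpos (by linarith : (0:ℝ) < y - 1)]
    have hAK : A * K = δ := by
      rw [hA]; field_simp
    nlinarith [mul_le_mul_of_nonneg_right hNle (by linarith : (0:ℝ) ≤ y - 1),
      mul_le_mul_of_nonneg_left hDle hApos.le]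
  have hle := intervalIntegral.integral_mono_on hab hI1 hI2 hmono
  -- compute the bound integral
  have hval : (∫ y in (1 + ε)..y₀, -A * (1 / (y - 1)))
      = -A * Real.log (y₀ - 1) + A * Real.log ε := by
    rw [intervalIntegral.integral_const_mul]
    have hcomp : (∫ y in (1 + ε)..y₀, 1 / (y - 1))
        = ∫ u in ((1 + ε) - 1)..(y₀ - 1), 1 / u := by
      exact (intervalIntegral.integral_comp_sub_right (fun u => 1 / u) 1)
    rw [hcomp, show (1 + ε) - 1 = ε by ring]
    rw [integral_one_div]
    · rw [Real.log_div (by linarith) (by linarith)]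
      ring
    · intro hmem'
      rw [Set.mem_uIcc] at hmem'
      rcases hmem' with ⟨h1, _⟩ | ⟨h1, h2⟩
      · linarith
      · linarith
  rw [hG]
  calc (∫ y in (1 + ε)..y₀, h y) ≤ ∫ y in (1 + ε)..y₀, -A * (1 / (y - 1)) := hle
    _ = -A * Real.log (y₀ - 1) + A * Real.log ε := hval

private theorem stmt_14_part2 (f : ℝ → ℝ) (hf : Continuous f)
    (hpos : ∀ y, 1 - (y ^ 2 - 1) * f y > 0)
    (c : ℝ) (hc : 1 < c) :
    IntegrableOn
      (fun y => (Real.sqrt (c ^ 2 - 1) * Real.sqrt (1 - (y ^ 2 - 1) * f y)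
          - Real.sqrt (c ^ 2 - y ^ 2))
        / ((y ^ 2 - 1) * Real.sqrt (c ^ 2 - y ^ 2))) (Set.Ioo (-c) c) volume := by
  have hc0 : (0:ℝ) < c := lt_trans one_pos hc
  have hc1 : (0:ℝ) < c ^ 2 - 1 := by nlinarith
  set sA : ℝ → ℝ := fun y => Real.sqrt (c ^ 2 - 1) * Real.sqrt (1 - (y ^ 2 - 1) * f y) with hsA
  set sB : ℝ → ℝ := fun y => Real.sqrt (c ^ 2 - y ^ 2) with hsB
  set g : ℝ → ℝ := fun y => (1 - (c ^ 2 - 1) * f y) / ((sA y + sB y) * sB y) with hg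
  have hsApos : ∀ y, 0 < sA y := fun y =>
    mul_pos (Real.sqrt_pos.mpr hc1) (Real.sqrt_pos.mpr (hpos y))
  have hsBnn : ∀ y, 0 ≤ sB y := fun y => Real.sqrt_nonneg _
  have hsBpos : ∀ y ∈ Ioo (-c) c, 0 < sB y := by
    intro y hy
    exact Real.sqrt_pos.mpr (by nlinarith [hy.1, hy.2])
  -- pointwise equality off {-1, 1}
  have heq : ∀ y : ℝ, y ^ 2 - 1 ≠ 0 →
      (sA y - sB y) / ((y ^ 2 - 1) * sB y) = g y := by
    intro y hy
    by_cases hB : sB y = 0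
    · simp [hg, hB]
    have hBpos : 0 < sB y := lt_of_le_of_ne (hsBnn y) (Ne.symm hB)
    have hB2 : 0 ≤ c ^ 2 - y ^ 2 := by
      by_contra h
      push_neg at h
      exact hB (Real.sqrt_eq_zero_of_nonpos h.le)
    have hA2 : sA y ^ 2 = (c ^ 2 - 1) * (1 - (y ^ 2 - 1) * f y) := by
      rw [hsA]; simp only
      rw [mul_pow, Real.sq_sqrt hc1.le, Real.sq_sqrt (hpos y).le]
    have hB2' : sB y ^ 2 = c ^ 2 - y ^ 2 := Real.sq_sqrt hB2
    have key : (sA y - sB y) * (sA y + sB y) = (y ^ 2 - 1) * (1 - (c ^ 2 - 1) * f y) := by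
      have h1 : (sA y - sB y) * (sA y + sB y) = sA y ^ 2 - sB y ^ 2 := by ring
      rw [h1, hA2, hB2']; ring
    have hAB : (sA y + sB y) ≠ 0 := by positivity
    rw [hg]; simp only
    rw [div_eq_div_iff (mul_ne_zero hy hB) (mul_ne_zero hAB hB)]
    linear_combination sB y * key
  -- a.e. equality on the restricted measure
  have haeeq : (fun y => (sA y - sB y) / ((y ^ 2 - 1) * sB y))
      =ᵐ[volume.restrict (Ioo (-c) c)] g := by
    have hmz : volume ({-1, 1} : Set ℝ) = 0 := by
      exact (Set.toFinite _).measure_zero volume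
    have h1 : ∀ᵐ y ∂(volume.restrict (Ioo (-c) c)), y ∉ ({-1, 1} : Set ℝ) :=
      ae_restrict_of_ae ((MeasureTheory.measure_eq_zero_iff_ae_notMem).mp hmz)
    filter_upwards [h1] with y hy
    apply heq
    intro hcon
    apply hy
    have : (y - 1) * (y + 1) = 0 := by linear_combination hcon
    simp only [Set.mem_insert_iff, Set.mem_singleton_iff]
    rcases mul_eq_zero.mp this with h | h
    · right; linarith
    · left; linarith
  have hgint : IntegrableOn g (Ioo (-c) c) volume := by
    -- continuity of g on the open interval
    have hcA : Continuous sA := by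
      rw [hsA]; fun_prop
    have hcB : Continuous sB := by
      rw [hsB]; fun_prop
    have hcnum : Continuous (fun y => 1 - (c ^ 2 - 1) * f y) := by fun_prop
    have hcg : ContinuousOn g (Ioo (-c) c) := by
      apply ContinuousOn.div hcnum.continuousOn
        (((hcA.add hcB).mul hcB).continuousOn)
      intro y hy
      exact ne_of_gt (mul_pos (by have := hsApos y; have := hsBnn y; simp only [Pi.add_apply]; linarith) (hsBpos y hy))
    have hgmeas : AEStronglyMeasurable g (volume.restrict (Ioo (-c) c)) :=
      hcg.aestronglyMeasurable measurableSet_Ioo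
    -- bound constant
    set φ : ℝ → ℝ := fun y => |1 - (c ^ 2 - 1) * f y| / sA y with hφ
    have hcφ : Continuous φ := by
      apply Continuous.div (by fun_prop) hcA
      intro y; exact ne_of_gt (hsApos y)
    obtain ⟨x₀, hx₀, hmax'⟩ := isCompact_Icc.exists_isMaxOn
      (nonempty_Icc.mpr (by linarith : -c ≤ c)) hcφ.continuousOn
    have hmax : ∀ y ∈ Icc (-c) c, φ y ≤ φ x₀ := fun y hy => hmax' hy
    set M : ℝ := φ x₀ with hM
    have hMnn : 0 ≤ M := le_trans (by positivity) (le_refl M)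
    set ψ : ℝ → ℝ := fun y => (c - y) ^ (-(1/2) : ℝ) + (y + c) ^ (-(1/2) : ℝ) with hψdef
    set C : ℝ := M * (Real.sqrt c)⁻¹ with hC
    -- pointwise bound
    have hbound : ∀ y ∈ Ioo (-c) c, ‖g y‖ ≤ C * ψ y := by
      intro y hy
      have hBpos := hsBpos y hy
      have hApos := hsApos y
      have hden : 0 < (sA y + sB y) * sB y := mul_pos (by linarith) hBpos
      have h1 : ‖g y‖ = |1 - (c ^ 2 - 1) * f y| / ((sA y + sB y) * sB y) := by
        rw [hg]; simp only [Real.norm_eq_abs, abs_div]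
        rw [abs_of_pos hden]
      have h2 : |1 - (c ^ 2 - 1) * f y| / ((sA y + sB y) * sB y)
          ≤ |1 - (c ^ 2 - 1) * f y| / (sA y * sB y) := by
        apply div_le_div_of_nonneg_left (abs_nonneg _) (mul_pos hApos hBpos)
        have : 0 ≤ sB y * sB y := by positivity
        nlinarith
      have h3 : |1 - (c ^ 2 - 1) * f y| / (sA y * sB y) = φ y * (sB y)⁻¹ := by
        rw [hφ]; field_simp
      have h4 : φ y ≤ M := hmax y ⟨hy.1.le, hy.2.le⟩
      have hφnn : 0 ≤ φ y := by rw [hφ]; positivity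
      -- 1/sB ≤ (√c)⁻¹ * ψ
      have hcy1 : (0:ℝ) < c - y := by linarith [hy.2]
      have hcy2 : (0:ℝ) < c + y := by linarith [hy.1]
      have hsplit : sB y = Real.sqrt (c - y) * Real.sqrt (c + y) := by
        rw [hsB]; simp only
        rw [show c ^ 2 - y ^ 2 = (c - y) * (c + y) by ring,
          Real.sqrt_mul hcy1.le]
      have hrw1 : (c - y) ^ (-(1/2) : ℝ) = (Real.sqrt (c - y))⁻¹ := by
        rw [Real.rpow_neg hcy1.le, Real.sqrt_eq_rpow]
      have hrw2 : (y + c) ^ (-(1/2) : ℝ) = (Real.sqrt (c + y))⁻¹ := by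
        rw [Real.rpow_neg (by linarith), Real.sqrt_eq_rpow, add_comm]
      have ha : (0:ℝ) < Real.sqrt (c - y) := Real.sqrt_pos.mpr hcy1
      have hb : (0:ℝ) < Real.sqrt (c + y) := Real.sqrt_pos.mpr hcy2
      have hs : (0:ℝ) < Real.sqrt c := Real.sqrt_pos.mpr hc0
      have hinv : (sB y)⁻¹ ≤ (Real.sqrt c)⁻¹ * ψ y := by
        rw [hsplit, hψdef]; simp only
        rw [hrw1, hrw2]
        rcases le_or_gt 0 y with hy0 | hy0
        · have hbs : Real.sqrt c ≤ Real.sqrt (c + y) := Real.sqrt_le_sqrt (by linarith)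
          have hb1 : (Real.sqrt (c + y))⁻¹ ≤ (Real.sqrt c)⁻¹ := by
            apply inv_anti₀ hs hbs
          calc (Real.sqrt (c - y) * Real.sqrt (c + y))⁻¹
              = (Real.sqrt (c + y))⁻¹ * (Real.sqrt (c - y))⁻¹ := by
                rw [mul_inv]; ring
            _ ≤ (Real.sqrt c)⁻¹ * (Real.sqrt (c - y))⁻¹ :=
                mul_le_mul_of_nonneg_right hb1 (by positivity)
            _ ≤ (Real.sqrt c)⁻¹ * ((Real.sqrt (c - y))⁻¹ + (Real.sqrt (c + y))⁻¹) := by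
                apply mul_le_mul_of_nonneg_left _ (by positivity)
                nlinarith [inv_pos.mpr hb]
        · have has : Real.sqrt c ≤ Real.sqrt (c - y) := Real.sqrt_le_sqrt (by linarith)
          have ha1 : (Real.sqrt (c - y))⁻¹ ≤ (Real.sqrt c)⁻¹ := by
            apply inv_anti₀ hs has
          calc (Real.sqrt (c - y) * Real.sqrt (c + y))⁻¹
              = (Real.sqrt (c - y))⁻¹ * (Real.sqrt (c + y))⁻¹ := by rw [mul_inv]
            _ ≤ (Real.sqrt c)⁻¹ * (Real.sqrt (c + y))⁻¹ :=
                mul_le_mul_of_nonneg_right ha1 (by positivity)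
            _ ≤ (Real.sqrt c)⁻¹ * ((Real.sqrt (c - y))⁻¹ + (Real.sqrt (c + y))⁻¹) := by
                apply mul_le_mul_of_nonneg_left _ (by positivity)
                nlinarith [inv_pos.mpr ha]
      calc ‖g y‖ = |1 - (c ^ 2 - 1) * f y| / ((sA y + sB y) * sB y) := h1
        _ ≤ |1 - (c ^ 2 - 1) * f y| / (sA y * sB y) := h2
        _ = φ y * (sB y)⁻¹ := h3
        _ ≤ M * ((Real.sqrt c)⁻¹ * ψ y) := by
            apply mul_le_mul h4 hinv (by positivity) hMnn
        _ = C * ψ y := by rw [hC]; ring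
    -- ψ is integrable
    have hψint : IntegrableOn (fun y => C * ψ y) (Ioo (-c) c) volume := by
      have base : IntervalIntegrable (fun x : ℝ => x ^ (-(1/2) : ℝ)) volume 0 (2 * c) :=
        intervalIntegral.intervalIntegrable_rpow' (by norm_num)
      have t1 : IntervalIntegrable (fun y : ℝ => (c - y) ^ (-(1/2) : ℝ)) volume (-c) c := by
        have h := (base.comp_sub_left c).symm
        rw [show c - 2 * c = -c by ring, show c - 0 = c by ring] at h
        exact h
      have t2 : IntervalIntegrable (fun y : ℝ => (y + c) ^ (-(1/2) : ℝ)) volume (-c) c := by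
        have h := base.comp_add_right c
        rw [show (0:ℝ) - c = -c by ring, show 2 * c - c = c by ring] at h
        exact h
      have hψ : IntervalIntegrable ψ volume (-c) c := t1.add t2
      have := (hψ.const_mul C)
      rw [intervalIntegrable_iff_integrableOn_Ioc_of_le (by linarith : -c ≤ c)] at this
      exact this.mono_set Ioo_subset_Ioc_self
    exact hψint.integrable.mono' hgmeas
      ((ae_restrict_iff' measurableSet_Ioo).mpr (ae_of_all _ hbound))
  exact hgint.congr haeeq.symm

/-- Hyperbolic case: (i) the improper integral from `1` of the `−` integrand
diverges to `−∞`; (ii) the closing integrand is integrable on `(−c, c)`. -/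
theorem stmt_14 (f : ℝ → ℝ) (hf : Continuous f)
    (hpos : ∀ y, 1 - (y ^ 2 - 1) * f y > 0)
    (c : ℝ) (hc : 1 < c) :
    (∀ y₀ : ℝ, 1 < y₀ → y₀ < c →
      Tendsto
        (fun ε => ∫ y in (1 + ε)..y₀,
          (-Real.sqrt (c ^ 2 - 1) * Real.sqrt (1 - (y ^ 2 - 1) * f y)
              - Real.sqrt (c ^ 2 - y ^ 2))
            / ((y ^ 2 - 1) * Real.sqrt (c ^ 2 - y ^ 2)))
        (nhdsWithin 0 (Set.Ioi 0)) atBot) ∧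
    IntegrableOn
      (fun y => (Real.sqrt (c ^ 2 - 1) * Real.sqrt (1 - (y ^ 2 - 1) * f y)
          - Real.sqrt (c ^ 2 - y ^ 2))
        / ((y ^ 2 - 1) * Real.sqrt (c ^ 2 - y ^ 2))) (Set.Ioo (-c) c) volume := by
  exact ⟨stmt_14_part1 f hf hpos c hc, stmt_14_part2 f hf hpos c hc⟩
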